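/- Let E be a finite meet-semilattice and let A be the unitization over ℂ of the semigroup algebra MonoidAlgebra ℂ E. For e ∈ E set p_e := e · ∏_{f ∈ E, e ⊓ f ≠ e} (1 − f) ∈ A. Then p_e is a nonzero element of Ẽ := { e₀(1−e₁)⋯(1−e_n) ∈ A : n ≥ 0, e_i ∈ E } \ {0}, and p_e is minimal in Ẽ: every q ∈ Ẽ with q · p_e = q satisfies q = p_e. -/

import Mathlib

/-- A meet-semilattice regarded as a commutative semigroup with product `e * f = e ⊓ f`. -/
instance semilatticeInfCommSemigroup (E : Type*) [SemilatticeInf E] : CommSemigroup E where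
  mul := (· ⊓ ·)
  mul_assoc := inf_assoc
  mul_comm := inf_comm

/-- The canonical image of `e : E` in the unitization over `ℂ` of the semigroup
algebra `MonoidAlgebra ℂ E`. -/
noncomputable def semilatticeBasis {E : Type*} [SemilatticeInf E] (e : E) :
    Unitization ℂ (MonoidAlgebra ℂ E) :=
  Unitization.inr (MonoidAlgebra.single e (1 : ℂ))

/-- The set `Ẽ` of nonzero elements of the form `e₀ (1-e₁) ⋯ (1-eₙ)`. -/
def tildeE (E : Type*) [SemilatticeInf E] : Set (Unitization ℂ (MonoidAlgebra ℂ E)) :=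
  {p | p ≠ 0 ∧ ∃ (e₀ : E) (es : List E),
    p = semilatticeBasis e₀ * (es.map fun e => 1 - semilatticeBasis e).prod}

/-- The element `p_e = e ∏_{f : e ⊓ f ≠ e} (1 - f)`. -/
noncomputable def minProj {E : Type*} [SemilatticeInf E] [Fintype E] [DecidableEq E] (e : E) :
    Unitization ℂ (MonoidAlgebra ℂ E) :=
  semilatticeBasis e *
    ∏ f ∈ Finset.univ.filter (fun f => e ⊓ f ≠ e), (1 - semilatticeBasis f)

section Aux

variable {E : Type*} [SemilatticeInf E]

lemma mul_eq_inf (g h : E) : g * h = g ⊓ h := rfl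

lemma basis_mul_basis (g h : E) :
    semilatticeBasis g * semilatticeBasis h = semilatticeBasis (g ⊓ h) := by
  simp only [semilatticeBasis, ← Unitization.inr_mul, MonoidAlgebra.single_mul_single,
    one_mul, mul_eq_inf]

/-- The multiplicative character `g ↦ [e ≤ g]`. -/
noncomputable def charMulHom (e : E) [DecidableEq E] : E →ₙ* ℂ where
  toFun g := if e ⊓ g = e then 1 else 0
  map_mul' g h := by
    simp only [mul_eq_inf, inf_eq_left, le_inf_iff]
    split_ifs with h1 h2 h3 h2 <;> simp_all

/-- The character extended to the unitization. -/
noncomputable def charHom (e : E) [DecidableEq E] :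
    Unitization ℂ (MonoidAlgebra ℂ E) →ₐ[ℂ] ℂ :=
  Unitization.lift ((MonoidAlgebra.liftMagma ℂ) (charMulHom e))

lemma charHom_basis (e g : E) [DecidableEq E] :
    charHom e (semilatticeBasis g) = if e ⊓ g = e then 1 else 0 := by
  simp only [charHom, semilatticeBasis, Unitization.lift_apply, NonUnitalAlgHom.toAlgHom_apply,
    Unitization.fst_inr, map_zero, Unitization.snd_inr, zero_add]
  rw [MonoidAlgebra.liftMagma_apply_apply]
  change ((Finsupp.liftAddHom fun x => (smulAddHom ℂ ℂ).flip ((charMulHom e) x)).comp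
            MonoidAlgebra.coeffAddEquiv.toAddMonoidHom) (MonoidAlgebra.single g 1) = _
  simp [charMulHom]

variable [Fintype E] [DecidableEq E]

lemma charHom_minProj (e : E) : charHom e (minProj e) = 1 := by
  rw [minProj, map_mul, map_prod, charHom_basis]
  rw [if_pos (inf_idem e)]
  rw [one_mul, Finset.prod_eq_one]
  intro f hf
  rw [Finset.mem_filter] at hf
  rw [map_sub, map_one, charHom_basis, if_neg hf.2, sub_zero]

lemma minProj_ne_zero (e : E) : minProj e ≠ 0 := fun h => by
  have := charHom_minProj e
  rw [h, map_zero] at this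
  exact one_ne_zero this.symm

lemma basis_mul_minProj_of_le (e g : E) (h : e ⊓ g = e) :
    semilatticeBasis g * minProj e = minProj e := by
  rw [minProj, ← mul_assoc, basis_mul_basis, inf_comm g e, h]

lemma basis_mul_minProj_of_not_le (e g : E) (h : e ⊓ g ≠ e) :
    semilatticeBasis g * minProj e = 0 := by
  have hg : g ∈ Finset.univ.filter (fun f => e ⊓ f ≠ e) := by
    simp [Finset.mem_filter, h]
  rw [minProj, ← Finset.mul_prod_erase _ _ hg]
  have key : semilatticeBasis g * semilatticeBasis e * (1 - semilatticeBasis g) = 0 := by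
    rw [basis_mul_basis, mul_one_sub, basis_mul_basis, inf_right_comm, inf_idem, sub_self]
  calc semilatticeBasis g * (semilatticeBasis e * ((1 - semilatticeBasis g) *
          ∏ x ∈ (Finset.univ.filter (fun f => e ⊓ f ≠ e)).erase g, (1 - semilatticeBasis x)))
      = (semilatticeBasis g * semilatticeBasis e * (1 - semilatticeBasis g)) *
          ∏ x ∈ (Finset.univ.filter (fun f => e ⊓ f ≠ e)).erase g,
            (1 - semilatticeBasis x) := by ring
    _ = 0 := by rw [key, zero_mul]

lemma basis_mul_minProj_mem (e g : E) :
    semilatticeBasis g * minProj e = 0 ∨ semilatticeBasis g * minProj e = minProj e := by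
  by_cases h : e ⊓ g = e
  · exact Or.inr (basis_mul_minProj_of_le e g h)
  · exact Or.inl (basis_mul_minProj_of_not_le e g h)

lemma one_sub_basis_mul_minProj_mem (e g : E) :
    (1 - semilatticeBasis g) * minProj e = 0 ∨
      (1 - semilatticeBasis g) * minProj e = minProj e := by
  rw [one_sub_mul]
  rcases basis_mul_minProj_mem e g with h | h
  · rw [h, sub_zero]; exact Or.inr rfl
  · rw [h, sub_self]; exact Or.inl rfl

lemma list_prod_mul_minProj (e : E) (es : List E) :
    (es.map fun f => 1 - semilatticeBasis f).prod * minProj e = 0 ∨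
      (es.map fun f => 1 - semilatticeBasis f).prod * minProj e = minProj e := by
  induction es with
  | nil => simp
  | cons g l ih =>
    simp only [List.map_cons, List.prod_cons, mul_assoc]
    rcases ih with h | h
    · rw [h, mul_zero]; exact Or.inl rfl
    · rw [h]; exact one_sub_basis_mul_minProj_mem e g

lemma tildeE_mul_minProj (e : E) (q : Unitization ℂ (MonoidAlgebra ℂ E))
    (hq : q ∈ tildeE E) : q * minProj e = 0 ∨ q * minProj e = minProj e := by
  obtain ⟨-, e₀, es, rfl⟩ := hq
  rw [mul_assoc]
  rcases list_prod_mul_minProj e es with h | h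
  · rw [h, mul_zero]; exact Or.inl rfl
  · rw [h]; exact basis_mul_minProj_mem e e₀

lemma minProj_mem_tildeE (e : E) : minProj e ∈ tildeE E := by
  refine ⟨minProj_ne_zero e, e, (Finset.univ.filter (fun f => e ⊓ f ≠ e)).toList, ?_⟩
  rw [minProj]
  congr 1
  rw [Finset.prod_eq_multiset_prod, ← Finset.coe_toList, Multiset.map_coe,
    Multiset.prod_coe]

end Aux

/-- For a finite meet-semilattice `E`, the element `p_e` is a nonzero element of `Ẽ`
and is minimal in `Ẽ`: every `q ∈ tildeE E` with `q p_e = q` equals `p_e`. -/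
theorem stmt_2 {E : Type*} [SemilatticeInf E] [Fintype E] [DecidableEq E] (e : E) :
    minProj e ∈ tildeE E ∧
      ∀ q ∈ tildeE E, q * minProj e = q → q = minProj e := by
  refine ⟨minProj_mem_tildeE e, fun q hq hqe => ?_⟩
  rcases tildeE_mul_minProj e q hq with h | h
  · exact absurd (hqe ▸ h) hq.1
  · rw [← hqe, h]
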